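/- Let T be a radially symmetric proper infinite rooted tree with radially symmetric weight σ, taking the value σ_k on every edge of the shell S_k. If Σ_{k≥1} 1/σ_k < ∞, then Mod_{∞,σ}(Γ_∞) = (Σ_{k≥1} 1/σ_k)^{-1}; if Σ_{k≥1} 1/σ_k = ∞, then Mod_{∞,σ}(Γ_∞) = 0. -/

import Mathlib

open scoped ENNReal NNReal

/-- A proper infinite rooted tree, modeled as a prefix-closed set of finite lists of
naturals in which every node has at least one and finitely many children. -/
structure PTree where
  mem : List ℕ → Prop
  root_mem : mem []
  prefix_closed : ∀ ⦃l₁ l₂ : List ℕ⦄, l₁ <+: l₂ → mem l₂ → mem l₁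
  child_exists : ∀ ⦃l⦄, mem l → ∃ a, mem (l ++ [a])
  finite_children : ∀ ⦃l⦄, mem l → {a : ℕ | mem (l ++ [a])}.Finite

/-- The initial segment of length `n` of `f : ℕ → ℕ`, as a list. -/
def seg (f : ℕ → ℕ) (n : ℕ) : List ℕ := (List.range n).map f

namespace PTree

variable (T : PTree)

/-- The edges of the tree: the nonempty lists in `T`. -/
def Edge : Type := {e : List ℕ // T.mem e ∧ e ≠ []}

/-- The family `Γ_∞` of infinite descending paths: functions all of whose
finite initial segments lie in `T`. -/
def GammaInf : Set (ℕ → ℕ) := {f | ∀ n, T.mem (seg f n)}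

/-- `ρ`-length of the infinite descending path determined by `f`: the sum of `ρ`
over the nonempty initial segments of `f`. -/
noncomputable def lenInf (ρ : List ℕ → ℝ≥0) (f : ℕ → ℕ) : ℝ≥0∞ :=
  ∑' n : ℕ, (ρ (seg f (n + 1)) : ℝ≥0∞)

/-- `ρ`-length of the finite descending path `γ_e` consisting of the nonempty
prefixes of the edge `e`. -/
noncomputable def lenFin (ρ : List ℕ → ℝ≥0) (e : List ℕ) : ℝ≥0∞ :=
  ∑ k ∈ Finset.range e.length, (ρ (e.take (k + 1)) : ℝ≥0∞)

/-- Admissible densities for the family `Γ_n` (identified with the shell `S_n`). -/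
def AdmFin (n : ℕ) : Set (List ℕ → ℝ≥0) :=
  {ρ | ∀ e : List ℕ, T.mem e → e.length = n → 1 ≤ lenFin ρ e}

/-- Admissible densities for the family `Γ_∞`. -/
def AdmInf : Set (List ℕ → ℝ≥0) :=
  {ρ | ∀ f ∈ T.GammaInf, 1 ≤ lenInf ρ f}

/-- The `p`-energy of a density `ρ` with respect to the weight `σ`. -/
noncomputable def energy (p : ℝ) (σ ρ : List ℕ → ℝ≥0) : ℝ≥0∞ :=
  ∑' e : T.Edge, (σ e.1 : ℝ≥0∞) * (ρ e.1 : ℝ≥0∞) ^ p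

/-- The `∞`-energy of a density `ρ` with respect to the weight `σ`. -/
noncomputable def energyTop (σ ρ : List ℕ → ℝ≥0) : ℝ≥0∞ :=
  ⨆ e : T.Edge, (σ e.1 : ℝ≥0∞) * (ρ e.1 : ℝ≥0∞)

/-- The `p`-modulus of the family `Γ_n`. -/
noncomputable def ModFin (p : ℝ) (σ : List ℕ → ℝ≥0) (n : ℕ) : ℝ≥0∞ :=
  ⨅ ρ ∈ T.AdmFin n, T.energy p σ ρ

/-- The `p`-modulus of the family `Γ_∞`. -/
noncomputable def ModInf (p : ℝ) (σ : List ℕ → ℝ≥0) : ℝ≥0∞ :=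
  ⨅ ρ ∈ T.AdmInf, T.energy p σ ρ

/-- The `∞`-modulus of the family `Γ_∞`. -/
noncomputable def ModTop (σ : List ℕ → ℝ≥0) : ℝ≥0∞ :=
  ⨅ ρ ∈ T.AdmInf, T.energyTop σ ρ

end PTree

namespace PTree

/-- A tree is radially symmetric if the number of children of an edge depends
only on its generation. -/
def RadiallySymmetric (T : PTree) : Prop :=
  ∀ ⦃e e' : List ℕ⦄, T.mem e → T.mem e' → e.length = e'.length →
    Nat.card {a : ℕ // T.mem (e ++ [a])} = Nat.card {a : ℕ // T.mem (e' ++ [a])}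

end PTree

/-- An infinite descending path, built by repeatedly choosing children. -/
noncomputable def pathAux (T : PTree) : ℕ → {l : List ℕ // T.mem l}
  | 0 => ⟨[], T.root_mem⟩
  | n + 1 =>
      ⟨(pathAux T n).1 ++ [(T.child_exists (pathAux T n).2).choose],
        (T.child_exists (pathAux T n).2).choose_spec⟩

/-- The function realizing the infinite descending path. -/
noncomputable def pathFun (T : PTree) : ℕ → ℕ :=
  fun n => (T.child_exists (pathAux T n).2).choose

lemma seg_pathFun (T : PTree) : ∀ n, seg (pathFun T) n = (pathAux T n).1 := by
  intro n
  induction n with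
  | zero => rfl
  | succ n ih =>
      simp only [seg, List.range_succ, List.map_append, List.map_cons, List.map_nil]
      rw [show (List.range n).map (pathFun T) = seg (pathFun T) n from rfl, ih]
      rfl

lemma pathFun_mem (T : PTree) (n : ℕ) : T.mem (seg (pathFun T) n) := by
  rw [seg_pathFun]; exact (pathAux T n).2

lemma seg_length (f : ℕ → ℕ) (n : ℕ) : (seg f n).length = n := by
  simp [seg]

/-- for a radially symmetric tree with radially symmetric weight
(value `σs k` on `S_k`): if `Σ_{k≥1} 1/σs k < ∞` then
`Mod_{∞,σ}(Γ_∞) = (Σ_{k≥1} 1/σs k)⁻¹`, and otherwise `Mod_{∞,σ}(Γ_∞) = 0`. -/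
theorem stmt10 (T : PTree) (hT : T.RadiallySymmetric)
    (σs : ℕ → ℝ≥0) (hσ : ∀ n, 0 < σs n) :
    ((∑' k : ℕ, (σs (k + 1) : ℝ≥0∞)⁻¹) ≠ ⊤ →
      T.ModTop (fun l => σs l.length) = (∑' k : ℕ, (σs (k + 1) : ℝ≥0∞)⁻¹)⁻¹) ∧
    ((∑' k : ℕ, (σs (k + 1) : ℝ≥0∞)⁻¹) = ⊤ →
      T.ModTop (fun l => σs l.length) = 0) := by
  set S : ℝ≥0∞ := ∑' k : ℕ, (σs (k + 1) : ℝ≥0∞)⁻¹ with hS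
  have hσ0 : ∀ n, (σs n : ℝ≥0∞) ≠ 0 := fun n => by exact_mod_cast (hσ n).ne'
  have hσtop : ∀ n, (σs n : ℝ≥0∞) ≠ ⊤ := fun n => ENNReal.coe_ne_top
  have hSpos : S ≠ 0 := by
    intro h
    have h1 : (σs (0 + 1) : ℝ≥0∞)⁻¹ ≤ S := ENNReal.le_tsum 0
    rw [h, le_zero_iff, ENNReal.inv_eq_zero] at h1
    exact hσtop 1 h1
  -- upper bound machinery
  have hub : ∀ ε : ℝ≥0∞, ε ≠ ⊤ → 1 ≤ ε * S →
      T.ModTop (fun l => σs l.length) ≤ ε := by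
    intro ε hε hεS
    set ρ : List ℕ → ℝ≥0 := fun l => ε.toNNReal * (σs l.length)⁻¹ with hρ
    have hcoe : ∀ l : List ℕ, (ρ l : ℝ≥0∞) = ε * (σs l.length : ℝ≥0∞)⁻¹ := by
      intro l
      rw [hρ]
      push_cast [ENNReal.coe_inv (hσ l.length).ne', ENNReal.coe_toNNReal hε]
      rfl
    have hadm : ρ ∈ T.AdmInf := by
      intro f hf
      have : PTree.lenInf ρ f = ε * S := by
        unfold PTree.lenInf
        rw [hS, ← ENNReal.tsum_mul_left]
        refine tsum_congr fun n => ?_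
        rw [hcoe, seg_length]
      rw [this]; exact hεS
    refine le_trans (iInf₂_le ρ hadm) ?_
    refine iSup_le fun e => ?_
    rw [hcoe, mul_left_comm, ENNReal.mul_inv_cancel (hσ0 _) (hσtop _), mul_one]
  -- lower bound (finite-sum case)
  have hlb : S ≠ ⊤ → S⁻¹ ≤ T.ModTop (fun l => σs l.length) := by
    intro hfin
    refine le_iInf₂ fun ρ hρ => ?_
    set M := T.energyTop (fun l => σs l.length) ρ with hM
    have hterm : ∀ n : ℕ,
        (ρ (seg (pathFun T) (n + 1)) : ℝ≥0∞) ≤ (σs (n + 1) : ℝ≥0∞)⁻¹ * M := by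
      intro n
      have hmem : T.mem (seg (pathFun T) (n + 1)) := pathFun_mem T (n + 1)
      have hne : seg (pathFun T) (n + 1) ≠ [] := by
        intro h
        have := seg_length (pathFun T) (n + 1)
        rw [h] at this
        simp at this
      set e : T.Edge := ⟨seg (pathFun T) (n + 1), hmem, hne⟩ with he
      have hle : (σs (seg (pathFun T) (n + 1)).length : ℝ≥0∞) *
          (ρ (seg (pathFun T) (n + 1)) : ℝ≥0∞) ≤ M :=
        le_iSup (fun e : T.Edge =>
          ((fun l => σs l.length) e.1 : ℝ≥0∞) * (ρ e.1 : ℝ≥0∞)) e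
      rw [seg_length] at hle
      have := mul_le_mul_right hle ((σs (n + 1) : ℝ≥0∞)⁻¹)
      rwa [← mul_assoc, ENNReal.inv_mul_cancel (hσ0 _) (hσtop _), one_mul] at this
    have h1 : (1 : ℝ≥0∞) ≤ S * M := by
      have hlen : (1 : ℝ≥0∞) ≤ PTree.lenInf ρ (pathFun T) := hρ _ (fun n => pathFun_mem T n)
      refine hlen.trans ?_
      unfold PTree.lenInf
      calc (∑' n : ℕ, (ρ (seg (pathFun T) (n + 1)) : ℝ≥0∞))
          ≤ ∑' n : ℕ, (σs (n + 1) : ℝ≥0∞)⁻¹ * M := ENNReal.tsum_le_tsum hterm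
        _ = S * M := by rw [hS, ENNReal.tsum_mul_right]
    have := mul_le_mul_right h1 S⁻¹
    rwa [mul_one, ← mul_assoc, ENNReal.inv_mul_cancel hSpos hfin, one_mul] at this
  constructor
  · intro hfin
    refine le_antisymm (hub S⁻¹ (by simp [hSpos]) ?_) (hlb hfin)
    rw [ENNReal.inv_mul_cancel hSpos hfin]
  · intro htop
    refine le_antisymm ?_ zero_le
    refine ENNReal.le_of_forall_pos_le_add fun ε hε _ => ?_
    rw [zero_add]
    refine hub ε ENNReal.coe_ne_top ?_
    rw [htop, ENNReal.mul_top (by exact_mod_cast hε.ne')]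
    exact le_top
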